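/- Let P be an r-differential poset. Then for all n ≥ 0, Σ_{x ∈ P_n} e(x)² = rⁿ · n!, where e(x) denotes the number of saturated chains 0̂ = x_0 ⋖ x_1 ⋖ ⋯ ⋖ x_n = x from 0̂ to x. -/

import Mathlib

open Classical in
/-- The up operator `U_n : ℚP_n → ℚP_{n+1}` of a graded poset with rank function `rank`,
sending each basis element `x ∈ P_n` to the sum of the elements covering it. -/
noncomputable def upMap {P : Type*} [PartialOrder P] (rank : P → ℕ)
    [∀ m : ℕ, Fintype {x : P // rank x = m}] (n : ℕ) :
    ({x : P // rank x = n} → ℚ) →ₗ[ℚ] ({x : P // rank x = n + 1} → ℚ) :=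
  Matrix.mulVecLin (fun (y : {x : P // rank x = n + 1}) (x : {x : P // rank x = n}) =>
    if (x : P) ⋖ (y : P) then 1 else 0)

open Classical in
/-- The down operator `D_n : ℚP_n → ℚP_{n-1}` of a graded poset with rank function `rank`,
sending each basis element `x ∈ P_n` to the sum of the elements it covers.
(For `n = 0` this is the zero map on `ℚP_0` in a graded poset, matching `D_0 = 0`.) -/
noncomputable def downMap {P : Type*} [PartialOrder P] (rank : P → ℕ)
    [∀ m : ℕ, Fintype {x : P // rank x = m}] (n : ℕ) :
    ({x : P // rank x = n} → ℚ) →ₗ[ℚ] ({x : P // rank x = n - 1} → ℚ) :=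
  Matrix.mulVecLin (fun (z : {x : P // rank x = n - 1}) (x : {x : P // rank x = n}) =>
    if (z : P) ⋖ (x : P) then 1 else 0)

/-- `P` (a partial order with rank function `rank`, all rank sets finite) is an
`r`-differential poset: `r > 0`, there is a least element `0̂` of rank `0`, the poset is
graded (covers raise rank by exactly one, the rank function is strictly monotone, and every
element of nonzero rank covers something), and `D_{n+1} U_n - U_{n-1} D_n = r·I` on `ℚP_n`
for all `n ≥ 0` (for `n = 0` the relation reads `D_1 U_0 = r·I`, since `D_0 = 0`). -/
structure IsDifferentialPoset {P : Type*} [PartialOrder P] (rank : P → ℕ)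
    [∀ m : ℕ, Fintype {x : P // rank x = m}] (r : ℕ) : Prop where
  r_pos : 0 < r
  exists_bot : ∃ b : P, rank b = 0 ∧ ∀ x : P, b ≤ x
  rank_covBy : ∀ x y : P, x ⋖ y → rank y = rank x + 1
  rank_strictMono : ∀ x y : P, x < y → rank x < rank y
  exists_covBy_of_rank_ne_zero : ∀ x : P, rank x ≠ 0 → ∃ y : P, y ⋖ x
  diff_zero : downMap rank 1 ∘ₗ upMap rank 0 = (r : ℚ) • LinearMap.id
  diff : ∀ n : ℕ,
    LinearMap.comp (M₃ := {x : P // rank x = n + 1} → ℚ)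
        (downMap rank (n + 2)) (upMap rank (n + 1))
      - upMap rank n ∘ₗ downMap rank (n + 1) = (r : ℚ) • LinearMap.id

/-- `chainCount n b x` is the number of saturated chains
`b = c 0 ⋖ c 1 ⋖ ⋯ ⋖ c n = x` of length `n` from `b` to `x`. -/
noncomputable def chainCount {P : Type*} [PartialOrder P] (n : ℕ) (b x : P) : ℕ :=
  Set.ncard {c : Fin (n + 1) → P |
    c 0 = b ∧ c (Fin.last n) = x ∧ ∀ i : Fin n, c i.castSucc ⋖ c i.succ}

open Classical

section Aux
variable {P : Type*} [PartialOrder P]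

/-- The set of saturated chains of length `n` from `b` to `x`. -/
def chainSet (n : ℕ) (b x : P) : Set (Fin (n + 1) → P) :=
  {c : Fin (n + 1) → P |
    c 0 = b ∧ c (Fin.last n) = x ∧ ∀ i : Fin n, c i.castSucc ⋖ c i.succ}

variable (rank : P → ℕ)

lemma rank_of_chain (hcov : ∀ x y : P, x ⋖ y → rank y = rank x + 1)
    {b : P} (hb0 : rank b = 0) {n : ℕ} {x : P} {c : Fin (n + 1) → P}
    (hc : c ∈ chainSet n b x) : ∀ i : Fin (n + 1), rank (c i) = i := by
  intro i
  induction i using Fin.induction with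
  | zero => simp [hc.1, hb0]
  | succ j ih =>
      have := hcov _ _ (hc.2.2 j)
      simp [this, ih]

lemma finite_chainSet [∀ m : ℕ, Fintype {x : P // rank x = m}]
    (hcov : ∀ x y : P, x ⋖ y → rank y = rank x + 1)
    {b : P} (hb0 : rank b = 0) (n : ℕ) (x : P) :
    Finite ↥(chainSet n b x) := by
  have : Finite (∀ i : Fin (n + 1), {y : P // rank y = (i : ℕ)}) := by infer_instance
  exact Finite.of_injective
    (fun c : ↥(chainSet n b x) =>
      (fun i => ⟨c.1 i, rank_of_chain rank hcov hb0 c.2 i⟩ :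
        ∀ i : Fin (n + 1), {y : P // rank y = (i : ℕ)}))
    (by
      intro c d h
      apply Subtype.ext
      funext i
      exact congrArg Subtype.val (congrFun h i))

lemma chainCount_eq_card (n : ℕ) (b x : P) :
    chainCount n b x = Nat.card ↥(chainSet n b x) := by
  rw [Nat.card_coe_set_eq]; rfl

lemma chainCount_zero (b x : P) : chainCount 0 b x = if x = b then 1 else 0 := by
  rw [chainCount_eq_card]
  by_cases h : x = b
  · subst h
    rw [if_pos rfl]
    have hs : chainSet 0 x x = {fun _ => x} := by
      ext c
      constructor
      · rintro ⟨h0, -, -⟩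
        funext i
        have : i = 0 := Fin.ext (by omega)
        rw [this, h0]
      · rintro rfl
        exact ⟨rfl, rfl, fun i => i.elim0⟩
    rw [hs, Nat.card_coe_set_eq, Set.ncard_singleton]
  · rw [if_neg h]
    have hs : chainSet 0 b x = (∅ : Set (Fin 1 → P)) := by
      ext c
      simp only [Set.mem_empty_iff_false, iff_false]
      rintro ⟨h0, hl, -⟩
      exact h (by rw [← hl, show Fin.last 0 = 0 from rfl, h0])
    rw [hs]
    simp [Nat.card_coe_set_eq]

/-- The key bijection: chains of length `n+1` to `x` correspond to pairs of a rank-`n`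
element `z` covered by `x` together with a chain of length `n` to `z`. -/
noncomputable def chainEquiv [∀ m : ℕ, Fintype {x : P // rank x = m}]
    (hcov : ∀ x y : P, x ⋖ y → rank y = rank x + 1)
    {b : P} (hb0 : rank b = 0) (n : ℕ) (x : P) :
    ↥(chainSet (n + 1) b x) ≃
      Σ z : {z : {z : P // rank z = n} // (z : P) ⋖ x}, ↥(chainSet n b (z : P)) where
  toFun c :=
    ⟨⟨⟨c.1 (Fin.last n).castSucc, by
        have := rank_of_chain rank hcov hb0 c.2 (Fin.last n).castSucc
        simpa using this⟩, by
        have h := c.2.2.2 (Fin.last n)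
        rw [Fin.succ_last, c.2.2.1] at h
        exact h⟩,
      ⟨fun i => c.1 i.castSucc, by
        refine ⟨by simpa using c.2.1, rfl, fun i => ?_⟩
        exact c.2.2.2 i.castSucc⟩⟩
  invFun zc :=
    ⟨Fin.snoc zc.2.1 x, by
      refine ⟨?_, Fin.snoc_last _ _, fun i => ?_⟩
      · have h0 : (0 : Fin (n + 2)) = (0 : Fin (n + 1)).castSucc := by simp
        rw [h0, Fin.snoc_castSucc]
        exact zc.2.2.1
      · induction i using Fin.lastCases with
        | last =>
            rw [Fin.succ_last, Fin.snoc_last, Fin.snoc_castSucc]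
            rw [zc.2.2.2.1]
            exact zc.1.2
        | cast j =>
            rw [Fin.succ_castSucc, Fin.snoc_castSucc, Fin.snoc_castSucc]
            exact zc.2.2.2.2 j⟩
  left_inv := by
    intro c
    apply Subtype.ext
    funext i
    show (Fin.snoc (fun i => c.1 i.castSucc) x : Fin (n + 2) → P) i = c.1 i
    induction i using Fin.lastCases with
    | last => rw [Fin.snoc_last]; exact c.2.2.1.symm
    | cast j => rw [Fin.snoc_castSucc]
  right_inv := by
    rintro ⟨⟨⟨z, hzr⟩, hzc⟩, c'⟩
    have hz' : (Fin.snoc c'.1 x : Fin (n + 2) → P) (Fin.last n).castSucc = z := by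
      rw [Fin.snoc_castSucc]; exact c'.2.2.1
    apply Sigma.ext
    · exact Subtype.ext (Subtype.ext hz')
    · rw [Subtype.heq_iff_coe_eq]
      · funext i
        show (Fin.snoc c'.1 x : Fin (n + 2) → P) i.castSucc = c'.1 i
        exact Fin.snoc_castSucc _ _ _
      · intro c
        simp only [hz']
end Aux

section Aux2
variable {P : Type*} [PartialOrder P] (rank : P → ℕ)
  [∀ m : ℕ, Fintype {x : P // rank x = m}]

lemma chainCount_succ (hcov : ∀ x y : P, x ⋖ y → rank y = rank x + 1)
    {b : P} (hb0 : rank b = 0) (n : ℕ) (x : P) :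
    chainCount (n + 1) b x =
      ∑ z : {z : P // rank z = n}, if (z : P) ⋖ x then chainCount n b (z : P) else 0 := by
  classical
  haveI hfin : ∀ z : {z : {z : P // rank z = n} // (z : P) ⋖ x},
      Fintype ↥(chainSet n b (z : P)) := fun z =>
    @Fintype.ofFinite _ (finite_chainSet rank hcov hb0 n _)
  rw [chainCount_eq_card, Nat.card_congr (chainEquiv rank hcov hb0 n x),
    Nat.card_eq_fintype_card, Fintype.card_sigma]
  have h1 : ∀ z : {z : {z : P // rank z = n} // (z : P) ⋖ x},
      Fintype.card ↥(chainSet n b (z : P)) = chainCount n b (z : P) := by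
    intro z
    rw [chainCount_eq_card, Nat.card_eq_fintype_card]
  rw [Finset.sum_congr rfl fun z _ => h1 z]
  rw [← Finset.sum_filter]
  have h2 := Finset.sum_subtype_eq_sum_filter (s := (Finset.univ : Finset {z : P // rank z = n}))
    (fun a => chainCount n b (a : P)) (p := fun a => (a : P) ⋖ x)
  rw [Finset.subtype_univ] at h2
  exact h2

/-- `vvec n = Uⁿ δ_b`. -/
noncomputable def vvec (b : P) : ∀ n : ℕ, ({x : P // rank x = n} → ℚ)
  | 0 => fun x => if (x : P) = b then 1 else 0
  | (n + 1) => upMap rank n (vvec b n)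

open Classical in
lemma upMap_apply (n : ℕ) (f : {x : P // rank x = n} → ℚ) (y : {x : P // rank x = n + 1}) :
    upMap rank n f y = ∑ z : {x : P // rank x = n}, if (z : P) ⋖ (y : P) then f z else 0 := by
  change Matrix.mulVec (fun (y : {x : P // rank x = n + 1}) (x : {x : P // rank x = n}) =>
    if (x : P) ⋖ (y : P) then (1 : ℚ) else 0) f y = _
  simp [Matrix.mulVec, dotProduct, ite_mul]

open Classical in
lemma downMap_apply (n : ℕ) (g : {x : P // rank x = n} → ℚ) (z : {x : P // rank x = n - 1}) :
    downMap rank n g z =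
      ∑ y : {x : P // rank x = n}, if (z : P) ⋖ (y : P) then g y else 0 := by
  change Matrix.mulVec (fun (z : {x : P // rank x = n - 1}) (x : {x : P // rank x = n}) =>
    if (z : P) ⋖ (x : P) then (1 : ℚ) else 0) g z = _
  simp [Matrix.mulVec, dotProduct, ite_mul]

lemma vvec_eq_chainCount (hcov : ∀ x y : P, x ⋖ y → rank y = rank x + 1)
    {b : P} (hb0 : rank b = 0) :
    ∀ (n : ℕ) (x : {x : P // rank x = n}), vvec rank b n x = (chainCount n b (x : P) : ℚ)
  | 0, x => by
      rw [chainCount_zero]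
      show (if (x : P) = b then (1 : ℚ) else 0) = _
      split_ifs <;> simp
  | (n + 1), x => by
      show upMap rank n (vvec rank b n) x = _
      rw [upMap_apply, chainCount_succ rank hcov hb0 n (x : P)]
      push_cast
      refine Finset.sum_congr rfl fun z _ => ?_
      rw [vvec_eq_chainCount hcov hb0 n z]

lemma adjoint_sum (n : ℕ) (f : {x : P // rank x = n} → ℚ) (g : {x : P // rank x = n + 1} → ℚ) :
    ∑ y : {x : P // rank x = n + 1}, upMap rank n f y * g y =
      ∑ z : {x : P // rank x = n}, f z * downMap rank (n + 1) g z := by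
  classical
  simp only [upMap_apply, downMap_apply, Finset.sum_mul, Finset.mul_sum]
  rw [Finset.sum_comm]
  refine Finset.sum_congr rfl fun z _ => Finset.sum_congr rfl fun y _ => ?_
  split_ifs <;> ring

end Aux2

section Aux3
variable {P : Type*} [PartialOrder P] (rank : P → ℕ)
  [∀ m : ℕ, Fintype {x : P // rank x = m}]

lemma down_vvec {r : ℕ} (hP : IsDifferentialPoset rank r) (b : P) (n : ℕ) :
    downMap rank (n + 1) (vvec rank b (n + 1)) = (((n : ℚ) + 1) * r) • vvec rank b n := by
  induction n with
  | zero =>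
      have h := LinearMap.congr_fun hP.diff_zero (vvec rank b 0)
      simp only [LinearMap.comp_apply, LinearMap.smul_apply, LinearMap.id_apply] at h
      show downMap rank 1 (upMap rank 0 (vvec rank b 0)) = _
      rw [h]
      norm_num
  | succ n ih =>
      have h := LinearMap.congr_fun (hP.diff n) (vvec rank b (n + 1))
      simp only [LinearMap.sub_apply, LinearMap.comp_apply, LinearMap.smul_apply,
        LinearMap.id_apply] at h
      rw [sub_eq_iff_eq_add] at h
      have h3 : upMap rank n (downMap rank (n + 1) (vvec rank b (n + 1)))
          = (((n : ℚ) + 1) * r) • upMap rank n (vvec rank b n) :=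
        (congrArg (upMap rank n) ih).trans (map_smul (upMap rank n) _ _)
      have h5 : ((r : ℚ)) • vvec rank b (n + 1)
            + ((((n : ℚ)) + 1) * r) • upMap rank n (vvec rank b n)
          = ((((n + 1 : ℕ) : ℚ) + 1) * (r : ℚ)) • vvec rank b (n + 1) := by
        show ((r : ℚ)) • vvec rank b (n + 1) + (((n : ℚ) + 1) * r) • vvec rank b (n + 1) = _
        rw [← add_smul]
        congr 1
        push_cast
        ring
      exact h.trans ((congrArg (fun w => ((r : ℚ)) • vvec rank b (n + 1) + w) h3).trans h5)

lemma sum_vvec_sq {r : ℕ} (hP : IsDifferentialPoset rank r) (b : P)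
    (hb0 : rank b = 0) (hb : ∀ x : P, b ≤ x) (n : ℕ) :
    ∑ x : {x : P // rank x = n}, vvec rank b n x * vvec rank b n x
      = (r : ℚ) ^ n * n.factorial := by
  induction n with
  | zero =>
      have huniq : ∀ x : {x : P // rank x = 0}, x = ⟨b, hb0⟩ := by
        intro x
        apply Subtype.ext
        by_contra hne
        have hlt : b < x.1 := lt_of_le_of_ne (hb x.1) (Ne.symm hne)
        have h2 := hP.rank_strictMono _ _ hlt
        rw [hb0, x.2] at h2
        exact lt_irrefl 0 h2
      letI : Unique {x : P // rank x = 0} := ⟨⟨⟨b, hb0⟩⟩, huniq⟩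
      rw [Fintype.sum_unique]
      have hd : vvec rank b 0 (default : {x : P // rank x = 0}) = 1 := by
        simp only [vvec]
        have hdef : ((default : {x : P // rank x = 0}) : P) = b := rfl
        rw [if_pos hdef]
      rw [hd]
      simp
  | succ n ih =>
      have hl : ∑ x : {x : P // rank x = n + 1},
          vvec rank b (n + 1) x * vvec rank b (n + 1) x
          = ∑ z : {x : P // rank x = n}, vvec rank b n z
              * downMap rank (n + 1) (vvec rank b (n + 1)) z :=
        adjoint_sum rank n (vvec rank b n) (vvec rank b (n + 1))
      rw [hl, down_vvec rank hP b n]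
      have hterm : ∀ z : {x : P // rank x = n},
          vvec rank b n z * ((((n : ℚ) + 1) * r) • vvec rank b n) z
          = (((n : ℚ) + 1) * r) * (vvec rank b n z * vvec rank b n z) := by
        intro z
        simp only [Pi.smul_apply, smul_eq_mul]
        ring
      rw [Finset.sum_congr rfl fun z _ => hterm z, ← Finset.mul_sum, ih]
      push_cast [Nat.factorial_succ]
      ring

end Aux3

/-- Stanley. In an `r`-differential poset with minimum `0̂ = b`,
`Σ_{x ∈ P_n} e(x)² = rⁿ · n!`, where `e(x)` is the number of saturated chains
`0̂ = x_0 ⋖ x_1 ⋖ ⋯ ⋖ x_n = x` from `0̂` to `x` (here `n = rank x`). -/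
theorem sum_sq_chainCount {P : Type*} [PartialOrder P] (rank : P → ℕ)
    [∀ m : ℕ, Fintype {x : P // rank x = m}] (r : ℕ)
    (hP : IsDifferentialPoset rank r)
    (b : P) (hb0 : rank b = 0) (hb : ∀ x : P, b ≤ x) (n : ℕ) :
    ∑ x : {x : P // rank x = n}, (chainCount n b (x : P)) ^ 2 = r ^ n * n.factorial := by
  have key := sum_vvec_sq rank hP b hb0 hb n
  have hv := vvec_eq_chainCount rank hP.rank_covBy hb0 (n := n)
  have hQ : ((∑ x : {x : P // rank x = n}, (chainCount n b (x : P)) ^ 2 : ℕ) : ℚ)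
      = (r : ℚ) ^ n * n.factorial := by
    push_cast
    rw [← key]
    exact Finset.sum_congr rfl fun x _ => by rw [hv x, sq]
  exact_mod_cast hQ
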